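/- In T(HV₁), for i ∈ {2,3} the element p_i := u_{i1} − ω u_{1,5−i} satisfies Δ(p_i) = p_i ⊗ 1 + 1 ⊗ p_i + (x₁x_{5−i} + x_i x₁ + x_{5−i}x_i) ⊗ x₄. In particular p_i becomes primitive in any quotient braided Hopf algebra in which x₁x_{5−i} + x_i x₁ + x_{5−i}x_i = 0. -/
import Mathlib


open FreeAlgebra

/-- `z_h = x_h x₄ − q₁ x₄ x_h` in the tensor algebra `T(HV₁)`, realized as the
free algebra on generators `x_i = ι (some i)` (`i : ZMod 3`) and `x₄ = ι none`. -/
def zT (k : Type*) [Field k] (q1 : k) (h : ZMod 3) :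
    FreeAlgebra k (Option (ZMod 3)) :=
  ι k (some h) * ι k none - q1 • (ι k (none : Option (ZMod 3)) * ι k (some h))

/-- `u_{ij} = x_i z_j + q₁ z_{2i−j} x_i` in `T(HV₁)`. -/
def uT (k : Type*) [Field k] (q1 : k) (i j : ZMod 3) :
    FreeAlgebra k (Option (ZMod 3)) :=
  ι k (some i) * zT k q1 j + q1 • (zT k q1 (2 * i - j) * ι k (some i))

/-- `p_i = u_{i1} − ω u_{1,5−i}` in `T(HV₁)`. -/
def pT (k : Type*) [Field k] (ω q1 : k) (i : ZMod 3) :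
    FreeAlgebra k (Option (ZMod 3)) :=
  uT k q1 i 1 - ω • uT k q1 1 (5 - i)

/-- `x₁x_{5−i} + x_i x₁ + x_{5−i} x_i` in `T(HV₁)`. -/
def sT (k : Type*) [Field k] (i : ZMod 3) : FreeAlgebra k (Option (ZMod 3)) :=
  ι k (some 1) * ι k (some (5 - i)) + ι k (some i) * ι k (some 1)
    + ι k (some (5 - i)) * ι k (some i)

set_option maxHeartbeats 2000000 in
/-- in `T(HV₁)`, for `i ∈ {2,3}` the element
`p_i = u_{i1} − ω u_{1,5−i}` satisfies
`Δ(p_i) = p_i ⊗ 1 + 1 ⊗ p_i + (x₁x_{5−i} + x_i x₁ + x_{5−i}x_i) ⊗ x₄`;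
in particular `p_i` becomes primitive whenever
`x₁x_{5−i} + x_i x₁ + x_{5−i}x_i = 0`.  The braided tensor square is modelled
as in Statement 17. -/
theorem pi_coproduct {k : Type*} [Field k] (ω q1 q2 : k)
    (hω : ω ^ 3 = 1) (hω1 : ω ≠ 1) (hq : q1 * q2 = -ω)
    {B : Type*} [Ring B] [Algebra k B]
    (l r : FreeAlgebra k (Option (ZMod 3)) →ₐ[k] B)
    (hc1 : ∀ i j : ZMod 3, r (ι k (some i)) * l (ι k (some j))
        = -(l (ι k (some (2 * i - j))) * r (ι k (some i))))
    (hc2 : ∀ i : ZMod 3, r (ι k (some i)) * l (ι k (none : Option (ZMod 3)))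
        = q1 • (l (ι k (none : Option (ZMod 3))) * r (ι k (some i))))
    (hc3 : ∀ i : ZMod 3, r (ι k (none : Option (ZMod 3))) * l (ι k (some i))
        = q2 • (l (ι k (some i)) * r (ι k (none : Option (ZMod 3)))))
    (hc4 : r (ι k (none : Option (ZMod 3))) * l (ι k (none : Option (ZMod 3)))
        = (-ω ^ 2) • (l (ι k (none : Option (ZMod 3))) * r (ι k (none : Option (ZMod 3)))))
    (Δ : FreeAlgebra k (Option (ZMod 3)) →ₐ[k] B)
    (hΔ : ∀ i : Option (ZMod 3), Δ (ι k i) = l (ι k i) + r (ι k i)) :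
    ∀ i : ZMod 3, i ≠ 1 →
      (Δ (pT k ω q1 i) = l (pT k ω q1 i) + r (pT k ω q1 i)
          + l (sT k i) * r (ι k (none : Option (ZMod 3)))) ∧
      (l (sT k i) = 0 → Δ (pT k ω q1 i) = l (pT k ω q1 i) + r (pT k ω q1 i)) := by
  have hsum : ω ^ 2 + ω + 1 = 0 := by
    have h0 : (ω - 1) * (ω ^ 2 + ω + 1) = 0 := by linear_combination hω
    rcases mul_eq_zero.mp h0 with h | h
    · exact absurd (sub_eq_zero.mp h) hω1
    · exact h
  have hc1' : ∀ (i j : ZMod 3) (x : B), r (ι k (some i)) * (l (ι k (some j)) * x)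
      = -(l (ι k (some (2 * i - j))) * (r (ι k (some i)) * x)) := by
    intro i j x; rw [← mul_assoc, hc1, neg_mul, mul_assoc]
  have hc2' : ∀ (i : ZMod 3) (x : B), r (ι k (some i)) * (l (ι k (none : Option (ZMod 3))) * x)
      = q1 • (l (ι k (none : Option (ZMod 3))) * (r (ι k (some i)) * x)) := by
    intro i x; rw [← mul_assoc, hc2, smul_mul_assoc, mul_assoc]
  have hc3' : ∀ (i : ZMod 3) (x : B), r (ι k (none : Option (ZMod 3))) * (l (ι k (some i)) * x)
      = q2 • (l (ι k (some i)) * (r (ι k (none : Option (ZMod 3))) * x)) := by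
    intro i x; rw [← mul_assoc, hc3, smul_mul_assoc, mul_assoc]
  have hc4' : ∀ (x : B), r (ι k (none : Option (ZMod 3))) * (l (ι k (none : Option (ZMod 3))) * x)
      = (-ω ^ 2) • (l (ι k (none : Option (ZMod 3))) * (r (ι k (none : Option (ZMod 3))) * x)) := by
    intro x; rw [← mul_assoc, hc4, smul_mul_assoc, mul_assoc]
  have e1 : (5 - 0 : ZMod 3) = 2 := by decide
  have e2 : (5 - 2 : ZMod 3) = 0 := by decide
  have f00 : (2 * 0 - 0 : ZMod 3) = 0 := by decide
  have f01 : (2 * 0 - 1 : ZMod 3) = 2 := by decide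
  have f02 : (2 * 0 - 2 : ZMod 3) = 1 := by decide
  have f10 : (2 * 1 - 0 : ZMod 3) = 2 := by decide
  have f11 : (2 * 1 - 1 : ZMod 3) = 1 := by decide
  have f12 : (2 * 1 - 2 : ZMod 3) = 0 := by decide
  have f20 : (2 * 2 - 0 : ZMod 3) = 1 := by decide
  have f21 : (2 * 2 - 1 : ZMod 3) = 0 := by decide
  have f22 : (2 * 2 - 2 : ZMod 3) = 2 := by decide
  intro i hi
  have key : Δ (pT k ω q1 i) = l (pT k ω q1 i) + r (pT k ω q1 i)
      + l (sT k i) * r (ι k (none : Option (ZMod 3))) := by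
    have h02 : ∀ j : ZMod 3, j ≠ 1 → j = 0 ∨ j = 2 := by decide
    rcases h02 i hi with rfl | rfl
    · simp only [pT, uT, zT, sT, map_sub, map_add, map_mul, map_smul, hΔ,
        e1, e2, f00, f01, f02, f10, f11, f12, f20, f21, f22]
      simp only [mul_add, add_mul, mul_sub, sub_mul, smul_add, smul_sub,
        smul_mul_assoc, mul_smul_comm, smul_smul, mul_assoc, neg_mul, mul_neg,
        smul_neg, neg_neg, hc1', hc2', hc3', hc4', hc1, hc2, hc3, hc4,
        e1, e2, f00, f01, f02, f10, f11, f12, f20, f21, f22]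
      match_scalars <;>
        (first
          | ring1
          | linear_combination -hq
          | linear_combination q1 * hq
          | linear_combination ω * hq - hsum
          | linear_combination (-ω) * hq + hsum
          | linear_combination (1 + ω) * hq - hsum
          | linear_combination q1 * ω * hq - q1 * hsum
          | linear_combination (-(q1) * (1 + ω)) * hq + q1 * hsum
          | linear_combination (1 - q1 * q2 + ω) * hq - hsum
          | linear_combination (ω * q1 * q2 - (1 + ω + ω ^ 2)) * hq + ω * hsum)
    · simp only [pT, uT, zT, sT, map_sub, map_add, map_mul, map_smul, hΔ,
        e1, e2, f00, f01, f02, f10, f11, f12, f20, f21, f22]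
      simp only [mul_add, add_mul, mul_sub, sub_mul, smul_add, smul_sub,
        smul_mul_assoc, mul_smul_comm, smul_smul, mul_assoc, neg_mul, mul_neg,
        smul_neg, neg_neg, hc1', hc2', hc3', hc4', hc1, hc2, hc3, hc4,
        e1, e2, f00, f01, f02, f10, f11, f12, f20, f21, f22]
      match_scalars <;>
        (first
          | ring1
          | linear_combination -hq
          | linear_combination q1 * hq
          | linear_combination ω * hq - hsum
          | linear_combination (-ω) * hq + hsum
          | linear_combination (1 + ω) * hq - hsum
          | linear_combination q1 * ω * hq - q1 * hsum
          | linear_combination (-(q1) * (1 + ω)) * hq + q1 * hsum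
          | linear_combination (1 - q1 * q2 + ω) * hq - hsum
          | linear_combination (ω * q1 * q2 - (1 + ω + ω ^ 2)) * hq + ω * hsum)
  exact ⟨key, fun h => by rw [key, h, zero_mul, add_zero]⟩
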